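/- Under the standing assumptions 0 < ā² < c² < 1 < a², M̄ > 0, B > 0, define H(s, y) = ā^{2s} y + M̄ (a^{2s} − 1) − max{c^{2s} y, B}, and s**(y) = (log y − log B)/log(1/c²) for y > B. Then for each y > B: H(s, y) = f₁(s, y) < f₂(s, y) for all s ∈ [0, s**(y)), H(s, y) = f₂(s, y) < f₁(s, y) for all s > s**(y), and consequently H(·, y) is quasiconvex on [0, s**(y)] and strongly convex on [s**(y), ∞), where f₁(s,y) = ā^{2s} y + M̄ (a^{2s} − 1) − c^{2s} y and f₂(s,y) = ā^{2s} y + M̄ (a^{2s} − 1) − B. -/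

import Mathlib

set_option maxHeartbeats 1000000


open Real

/-- `b^{2s} := exp(2 s log b)` -/
noncomputable def pw (b s : ℝ) : ℝ := Real.exp (2 * s * Real.log b)

/-- `f₁(s,y) = ā^{2s} y + M̄(a^{2s}-1) - c^{2s} y` -/
noncomputable def f₁ (a abar c M s y : ℝ) : ℝ :=
  pw abar s * y + M * (pw a s - 1) - pw c s * y

/-- `f₂(s,y) = ā^{2s} y + M̄(a^{2s}-1) - B` -/
noncomputable def f₂ (a abar M B s y : ℝ) : ℝ :=
  pw abar s * y + M * (pw a s - 1) - B

/-- `H(s,y) = ā^{2s} y + M̄(a^{2s}-1) - max{c^{2s} y, B}` -/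
noncomputable def Hfun (a abar c M B s y : ℝ) : ℝ :=
  pw abar s * y + M * (pw a s - 1) - max (pw c s * y) B

/-- `s**(y) = (log y - log B)/log(1/c²)` -/
noncomputable def sstar2 (c B y : ℝ) : ℝ := (Real.log y - Real.log B) / Real.log (1 / c ^ 2)

/- ---------- auxiliary material ---------- -/

/-- derivative of `f₁(·,y)` -/
noncomputable def f₁d (a abar c M y s : ℝ) : ℝ :=
  2 * Real.log abar * Real.exp (2 * s * Real.log abar) * y
    + M * (2 * Real.log a * Real.exp (2 * s * Real.log a))
    - 2 * Real.log c * Real.exp (2 * s * Real.log c) * y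

/-- `f₁d` divided by `exp (2 s log abar)` -/
noncomputable def phi1 (a abar c M y s : ℝ) : ℝ :=
  2 * Real.log abar * y
    + M * (2 * Real.log a) * Real.exp ((2 * Real.log a - 2 * Real.log abar) * s)
    - 2 * Real.log c * y * Real.exp ((2 * Real.log c - 2 * Real.log abar) * s)

lemma hasDerivAt_exp2 (L s : ℝ) :
    HasDerivAt (fun u : ℝ => Real.exp (2 * u * L)) (2 * L * Real.exp (2 * s * L)) s := by
  have h : HasDerivAt (fun u : ℝ => 2 * u * L) (2 * L) s := by
    simpa using ((hasDerivAt_id s).const_mul 2).mul_const L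
  have := h.exp
  convert this using 1
  ring

lemma hasDerivAt_f₁ (a abar c M y s : ℝ) :
    HasDerivAt (fun u => f₁ a abar c M u y) (f₁d a abar c M y s) s := by
  have h := (((hasDerivAt_exp2 (Real.log abar) s).mul_const y).add
      (((hasDerivAt_exp2 (Real.log a) s).sub_const 1).const_mul M)).sub
      ((hasDerivAt_exp2 (Real.log c) s).mul_const y)
  simp only [f₁, pw, f₁d]; exact h

lemma f₁d_eq_phi1 (a abar c M y s : ℝ) :
    f₁d a abar c M y s = phi1 a abar c M y s * Real.exp (2 * s * Real.log abar) := by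
  have e1 : Real.exp ((2 * Real.log a - 2 * Real.log abar) * s) *
      Real.exp (2 * s * Real.log abar) = Real.exp (2 * s * Real.log a) := by
    rw [← Real.exp_add]; ring_nf
  have e2 : Real.exp ((2 * Real.log c - 2 * Real.log abar) * s) *
      Real.exp (2 * s * Real.log abar) = Real.exp (2 * s * Real.log c) := by
    rw [← Real.exp_add]; ring_nf
  simp only [f₁d, phi1]
  linear_combination (-(M * (2 * Real.log a))) * e1 + (2 * Real.log c * y) * e2

theorem H_convexity_intervals (a abar c M B : ℝ)
    (ha : 0 < a) (habar : 0 < abar) (hc : 0 < c) (hM : 0 < M) (hB : 0 < B)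
    (h1 : abar ^ 2 < c ^ 2) (h2 : c ^ 2 < 1) (h3 : 1 < a ^ 2)
    (y : ℝ) (hy : B < y) :
    (∀ s : ℝ, 0 ≤ s → s < sstar2 c B y →
        Hfun a abar c M B s y = f₁ a abar c M s y ∧
          f₁ a abar c M s y < f₂ a abar M B s y) ∧
    (∀ s : ℝ, sstar2 c B y < s →
        Hfun a abar c M B s y = f₂ a abar M B s y ∧
          f₂ a abar M B s y < f₁ a abar c M s y) ∧
    QuasiconvexOn ℝ (Set.Icc (0 : ℝ) (sstar2 c B y)) (fun s => Hfun a abar c M B s y) ∧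
    ∃ m : ℝ, 0 < m ∧
      StrongConvexOn (Set.Ici (sstar2 c B y)) m (fun s => Hfun a abar c M B s y) := by
  have hy0 : 0 < y := hB.trans hy
  have hc1 : c < 1 := by nlinarith
  have habc : abar < c := by nlinarith
  have ha1 : 1 < a := by nlinarith
  have hlc : Real.log c < 0 := Real.log_neg hc hc1
  have hlb : Real.log abar < Real.log c := Real.log_lt_log habar habc
  have hla : 0 < Real.log a := Real.log_pos ha1
  have hL : Real.log (1 / c ^ 2) = -(2 * Real.log c) := by
    rw [one_div, Real.log_inv, Real.log_pow]; push_cast; ring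
  have hlc2 : (0 : ℝ) < -(2 * Real.log c) := by linarith
  have hsst : sstar2 c B y = (Real.log y - Real.log B) / (-(2 * Real.log c)) := by
    rw [sstar2, hL]
  -- key crossing equivalences
  have hrep : ∀ s : ℝ, pw c s * y = Real.exp (2 * s * Real.log c + Real.log y) := by
    intro s; rw [pw, Real.exp_add, Real.exp_log hy0]
  have hkey : ∀ s : ℝ, pw c s * y < B ↔ sstar2 c B y < s := by
    intro s
    rw [hrep s, hsst, div_lt_iff₀ hlc2,
      show B = Real.exp (Real.log B) from (Real.exp_log hB).symm, Real.exp_lt_exp,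
      Real.log_exp]
    constructor <;> intro h <;> nlinarith [h]
  have hkey2 : ∀ s : ℝ, B < pw c s * y ↔ s < sstar2 c B y := by
    intro s
    rw [hrep s, hsst, lt_div_iff₀ hlc2,
      show B = Real.exp (Real.log B) from (Real.exp_log hB).symm, Real.exp_lt_exp,
      Real.log_exp]
    constructor <;> intro h <;> nlinarith [h]
  have hkeyle : ∀ s : ℝ, s ≤ sstar2 c B y → B ≤ pw c s * y := by
    intro s hs
    by_contra h
    push_neg at h
    exact absurd ((hkey s).mp h) (not_lt.mpr hs)
  have hkeyge : ∀ s : ℝ, sstar2 c B y ≤ s → pw c s * y ≤ B := by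
    intro s hs
    by_contra h
    push_neg at h
    exact absurd ((hkey2 s).mp h) (not_lt.mpr hs)
  refine ⟨?_, ?_, ?_, ?_⟩
  · -- part 1
    intro s _ hslt
    have hB' := (hkey2 s).mpr hslt
    constructor
    · rw [Hfun, f₁, max_eq_left hB'.le]
    · rw [f₁, f₂]; linarith
  · -- part 2
    intro s hsgt
    have hB' := (hkey s).mpr hsgt
    constructor
    · rw [Hfun, f₂, max_eq_right hB'.le]
    · rw [f₁, f₂]; linarith
  · -- part 3: quasiconvexity
    -- strict monotonicity of phi1
    have hphi : StrictMono (phi1 a abar c M y) := by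
      intro s t hst
      have e1 : Real.exp ((2 * Real.log a - 2 * Real.log abar) * s) <
          Real.exp ((2 * Real.log a - 2 * Real.log abar) * t) := by
        apply Real.exp_lt_exp.mpr; nlinarith
      have e2 : Real.exp ((2 * Real.log c - 2 * Real.log abar) * s) <
          Real.exp ((2 * Real.log c - 2 * Real.log abar) * t) := by
        apply Real.exp_lt_exp.mpr; nlinarith
      have c1 : (0 : ℝ) < M * (2 * Real.log a) := by
        apply mul_pos hM; linarith
      have c2 : (0 : ℝ) < -(2 * Real.log c) * y := mul_pos hlc2 hy0
      have p1 := mul_lt_mul_of_pos_left e1 c1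
      have p2 := mul_lt_mul_of_pos_left e2 c2
      simp only [phi1]
      nlinarith [p1, p2]
    have hdiff : Differentiable ℝ (fun u => f₁ a abar c M u y) :=
      fun s => (hasDerivAt_f₁ a abar c M y s).differentiableAt
    have hderiv : ∀ s : ℝ, deriv (fun u => f₁ a abar c M u y) s = f₁d a abar c M y s :=
      fun s => (hasDerivAt_f₁ a abar c M y s).deriv
    -- core inequality
    have hcore : ∀ x m z : ℝ, x ≤ m → m ≤ z →
        f₁ a abar c M m y ≤ max (f₁ a abar c M x y) (f₁ a abar c M z y) := by
      intro x m z hxm hmz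
      by_cases hφm : phi1 a abar c M y m ≤ 0
      · refine le_trans ?_ (le_max_left _ _)
        have hant : AntitoneOn (fun u => f₁ a abar c M u y) (Set.Icc x m) := by
          apply antitoneOn_of_deriv_nonpos (convex_Icc x m) hdiff.continuous.continuousOn
            (hdiff.differentiableOn)
          intro s hs
          rw [interior_Icc] at hs
          rw [hderiv s, f₁d_eq_phi1]
          have hlt : phi1 a abar c M y s < 0 := lt_of_lt_of_le (hphi hs.2) hφm
          exact mul_nonpos_iff.mpr (Or.inr ⟨hlt.le, (Real.exp_pos _).le⟩)
        exact hant (Set.left_mem_Icc.mpr hxm) (Set.right_mem_Icc.mpr hxm) hxm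
      · push_neg at hφm
        refine le_trans ?_ (le_max_right _ _)
        have hmon : MonotoneOn (fun u => f₁ a abar c M u y) (Set.Icc m z) := by
          apply monotoneOn_of_deriv_nonneg (convex_Icc m z) hdiff.continuous.continuousOn
            (hdiff.differentiableOn)
          intro s hs
          rw [interior_Icc] at hs
          rw [hderiv s, f₁d_eq_phi1]
          have hgt : 0 < phi1 a abar c M y s := hφm.trans (hphi hs.1)
          exact mul_nonneg hgt.le (Real.exp_pos _).le
        exact hmon (Set.left_mem_Icc.mpr hmz) (Set.right_mem_Icc.mpr hmz) hmz
    have HeqF : ∀ s ∈ Set.Icc (0 : ℝ) (sstar2 c B y),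
        Hfun a abar c M B s y = f₁ a abar c M s y := by
      intro s hs
      rw [Hfun, f₁, max_eq_left (hkeyle s hs.2)]
    refine quasiconvexOn_iff_le_max.mpr ⟨convex_Icc _ _, ?_⟩
    intro p hp q hq α β hα hβ hαβ
    have hmem : α • p + β • q ∈ Set.Icc (0 : ℝ) (sstar2 c B y) :=
      (convex_Icc (0:ℝ) (sstar2 c B y)) hp hq hα hβ hαβ
    simp only [smul_eq_mul] at hmem ⊢
    rw [HeqF p hp, HeqF q hq, HeqF _ hmem]
    have hz : α + β - 1 = 0 := by linarith
    rcases le_total p q with hpq | hpq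
    · have h1 : p ≤ α * p + β * q := by
        linarith [mul_nonneg hβ (sub_nonneg.mpr hpq), mul_eq_zero_of_left hz p]
      have h2 : α * p + β * q ≤ q := by
        linarith [mul_nonneg hα (sub_nonneg.mpr hpq), mul_eq_zero_of_left hz q]
      exact hcore p _ q h1 h2
    · have h1 : q ≤ α * p + β * q := by
        linarith [mul_nonneg hα (sub_nonneg.mpr hpq), mul_eq_zero_of_left hz q]
      have h2 : α * p + β * q ≤ p := by
        linarith [mul_nonneg hβ (sub_nonneg.mpr hpq), mul_eq_zero_of_left hz p]
      exact (hcore q _ p h1 h2).trans (max_comm _ _).le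
  · -- part 4: strong convexity
    set sst := sstar2 c B y with hsstdef
    have HeqG : ∀ s ∈ Set.Ici sst, Hfun a abar c M B s y = f₂ a abar M B s y := by
      intro s hs
      rw [Hfun, f₂, max_eq_right (hkeyge s hs)]
    set mv : ℝ := M * (2 * Real.log a) ^ 2 * Real.exp (2 * sst * Real.log a) with hmv
    have hmvpos : 0 < mv := by positivity
    -- the shifted function and its derivatives
    set g : ℝ → ℝ := fun s => f₂ a abar M B s y - mv / 2 * s ^ 2 with hg
    have hg1 : ∀ s : ℝ, HasDerivAt g
        (2 * Real.log abar * Real.exp (2 * s * Real.log abar) * y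
          + M * (2 * Real.log a * Real.exp (2 * s * Real.log a)) - mv / 2 * (2 * s)) s := by
      intro s
      have h := ((((hasDerivAt_exp2 (Real.log abar) s).mul_const y).add
        (((hasDerivAt_exp2 (Real.log a) s).sub_const 1).const_mul M)).sub_const B).sub
        (((hasDerivAt_pow 2 s).const_mul (mv / 2)))
      rw [hg]
      simp only [f₂, pw]
      convert h using 1
      · rfl
      · rfl
      · rfl
      · push_cast; ring
    set g' : ℝ → ℝ := fun s => 2 * Real.log abar * Real.exp (2 * s * Real.log abar) * y
          + M * (2 * Real.log a * Real.exp (2 * s * Real.log a)) - mv * s with hg'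
    have hg1' : ∀ s : ℝ, HasDerivAt g (g' s) s := by
      intro s
      have h := hg1 s
      convert h using 1
      simp only [hg']; ring
    have hg2 : ∀ s : ℝ, HasDerivAt g'
        (2 * Real.log abar * (2 * Real.log abar * Real.exp (2 * s * Real.log abar)) * y
          + M * (2 * Real.log a * (2 * Real.log a * Real.exp (2 * s * Real.log a))) - mv) s := by
      intro s
      have h := ((((hasDerivAt_exp2 (Real.log abar) s).const_mul (2 * Real.log abar)).mul_const y).add
        (((hasDerivAt_exp2 (Real.log a) s).const_mul (2 * Real.log a)).const_mul M)).sub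
        ((hasDerivAt_id s).const_mul mv)
      rw [hg']
      convert h using 1
      · rfl
      · rfl
      · rfl
      · ring
    have hderivg : deriv g = g' := funext fun s => (hg1' s).deriv
    have hgdiff : Differentiable ℝ g := fun s => (hg1' s).differentiableAt
    have hg'diff : Differentiable ℝ g' := fun s => (hg2 s).differentiableAt
    have hconv : ConvexOn ℝ (Set.Ici sst) g := by
      apply convexOn_of_deriv2_nonneg (convex_Ici sst) hgdiff.continuous.continuousOn
        hgdiff.differentiableOn
      · rw [hderivg]; exact hg'diff.differentiableOn
      · intro x hx
        rw [interior_Ici] at hx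
        have hxval : deriv^[2] g x =
            2 * Real.log abar * (2 * Real.log abar * Real.exp (2 * x * Real.log abar)) * y
              + M * (2 * Real.log a * (2 * Real.log a * Real.exp (2 * x * Real.log a))) - mv := by
          rw [Function.iterate_succ_apply', Function.iterate_one, hderivg]
          exact (hg2 x).deriv
        rw [hxval, hmv]
        have he : Real.exp (2 * sst * Real.log a) ≤ Real.exp (2 * x * Real.log a) := by
          apply Real.exp_le_exp.mpr; nlinarith [hla, le_of_lt (Set.mem_Ioi.mp hx)]
        have hterm1 : 0 ≤ (2 * Real.log abar) ^ 2 * Real.exp (2 * x * Real.log abar) * y := by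
          positivity
        have hterm2 : M * (2 * Real.log a) ^ 2 * Real.exp (2 * sst * Real.log a) ≤
            M * (2 * Real.log a) ^ 2 * Real.exp (2 * x * Real.log a) :=
          mul_le_mul_of_nonneg_left he (by positivity)
        nlinarith [hterm1, hterm2]
    have hSC : StrongConvexOn (Set.Ici sst) mv (fun s => f₂ a abar M B s y) := by
      rw [strongConvexOn_iff_convex]
      have : (fun x : ℝ => f₂ a abar M B x y - mv / 2 * ‖x‖ ^ 2) = g := by
        funext x
        rw [hg]
        simp [Real.norm_eq_abs, sq_abs]
      rw [this]
      exact hconv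
    refine ⟨mv, hmvpos, hSC.1, ?_⟩
    intro p hp q hq α β hα hβ hαβ
    have hmem : α • p + β • q ∈ Set.Ici sst := hSC.1 hp hq hα hβ hαβ
    simp only [HeqG p hp, HeqG q hq, HeqG _ hmem]
    exact hSC.2 hp hq hα hβ hαβ
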